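/- Let S = S₁ × ⋯ × Sₙ, n ≥ 2, where each Sᵢ is a finite antinegative semifield (every nonzero element is multiplicatively invertible) and at least two of the Sᵢ are not isomorphic to the Boolean semiring B. Then dim(Γ₁(S)) = |S₁|·|S₂|⋯|Sₙ| − (|S₁|−1)(|S₂|−1)⋯(|Sₙ|−1) − 2ⁿ + 1. -/

import Mathlib

/-- `x` is a zero-divisor of the commutative semiring `S`. -/
def IsZD {S : Type*} [CommSemiring S] (x : S) : Prop :=
  ∃ y : S, y ≠ 0 ∧ x * y = 0

/-- The total graph of a commutative semiring: distinct `x, y` are adjacent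
iff `x + y` is a zero-divisor. -/
def totalGraph (S : Type*) [CommSemiring S] : SimpleGraph S where
  Adj x y := x ≠ y ∧ IsZD (x + y)
  symm := by
    constructor
    intro x y h
    exact ⟨h.1.symm, by rw [add_comm]; exact h.2⟩
  loopless := by constructor; intro x h; exact h.1 rfl

/-- The induced subgraph of the total graph on the set of zero-divisors. -/
def gamma1 (S : Type*) [CommSemiring S] : SimpleGraph {x : S // IsZD x} :=
  SimpleGraph.comap Subtype.val (totalGraph S)

/-- A resolving set: distinct vertices have distinct distance vectors to `W`. -/
def IsResolving {V : Type*} (G : SimpleGraph V) (W : Set V) : Prop :=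
  ∀ x y : V, (∀ w ∈ W, G.dist x w = G.dist y w) → x = y

/-- The metric dimension: the least cardinality of a resolving set. -/
noncomputable def metricDim {V : Type*} (G : SimpleGraph V) : ℕ :=
  sInf {k | ∃ W : Set V, W.Finite ∧ W.ncard = k ∧ IsResolving G W}

/-- The Boolean semiring `𝔹 = {0,1}` with `1 + 1 = 1`. -/
inductive BB : Type
  | zero : BB
  | one : BB
deriving DecidableEq

instance : Zero BB := ⟨.zero⟩
instance : One BB := ⟨.one⟩
instance : Add BB := ⟨fun x y => match x, y with | .zero, y => y | .one, _ => .one⟩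
instance : Mul BB := ⟨fun x y => match x, y with | .zero, _ => .zero | .one, y => y⟩
instance : Fintype BB := ⟨{.zero, .one}, by intro x; cases x <;> decide⟩

instance : CommSemiring BB where
  add_assoc := by decide
  zero_add := by decide
  add_zero := by decide
  add_comm := by decide
  mul_assoc := by decide
  one_mul := by decide
  mul_one := by decide
  left_distrib := by decide
  right_distrib := by decide
  zero_mul := by decide
  mul_zero := by decide
  mul_comm := by decide
  nsmul := nsmulRec
  npow := npowRec


set_option linter.unusedSectionVars false

section Aux
variable {n : ℕ} {S : Fin n → Type*} [∀ i, CommSemiring (S i)] [∀ i, Fintype (S i)]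
  [∀ i, Nontrivial (S i)]

lemma zd_iff (semifield : ∀ i, ∀ x : S i, x ≠ 0 → IsUnit x) (x : ∀ i, S i) :
    IsZD x ↔ ∃ i, x i = 0 := by
  constructor
  · rintro ⟨y, hy, hxy⟩
    have : ∃ j, y j ≠ 0 := by
      by_contra h; push_neg at h; exact hy (funext h)
    obtain ⟨j, hj⟩ := this
    have h0 : x j * y j = 0 := congrFun hxy j
    exact ⟨j, ((semifield j (y j) hj).mul_left_eq_zero).1 h0⟩
  · rintro ⟨i, hi⟩
    classical
    refine ⟨fun j => if x j = 0 then 1 else 0, ?_, ?_⟩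
    · intro h
      have := congrFun h i
      simp [hi] at this
    · funext j
      by_cases h : x j = 0 <;> simp [Pi.mul_apply, h]

variable (anti : ∀ i, ∀ a b : S i, a + b = 0 → a = 0 ∧ b = 0)
  (semifield : ∀ i, ∀ x : S i, x ≠ 0 → IsUnit x)

include anti semifield in
lemma adj_iff (x y : {x : ∀ i, S i // IsZD x}) :
    (gamma1 (∀ i, S i)).Adj x y ↔ x ≠ y ∧ ∃ i, x.1 i = 0 ∧ y.1 i = 0 := by
  show ((x : ∀ i, S i) ≠ (y : ∀ i, S i) ∧ IsZD ((x : ∀ i, S i) + (y : ∀ i, S i))) ↔ _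
  rw [zd_iff semifield]
  constructor
  · rintro ⟨hne, i, hi⟩
    have := anti i (x.1 i) (y.1 i) hi
    exact ⟨fun h => hne (congrArg Subtype.val h), i, this⟩
  · rintro ⟨hne, i, hx, hy⟩
    refine ⟨fun h => hne (Subtype.ext h), i, ?_⟩
    show x.1 i + y.1 i = 0
    rw [hx, hy, add_zero]

include anti semifield in
lemma gamma1_dist_one {x y : {x : ∀ i, S i // IsZD x}} (hne : x ≠ y)
    (h : ∃ i, x.1 i = 0 ∧ y.1 i = 0) : (gamma1 (∀ i, S i)).dist x y = 1 :=
  SimpleGraph.dist_eq_one_iff_adj.2 ((adj_iff anti semifield x y).2 ⟨hne, h⟩)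

include anti semifield in
lemma dist_two (hn : 0 < n) {x y : {x : ∀ i, S i // IsZD x}} (hne : x ≠ y)
    (h : ¬ ∃ i, x.1 i = 0 ∧ y.1 i = 0) : (gamma1 (∀ i, S i)).dist x y = 2 := by
  have hz : IsZD (0 : ∀ i, S i) := (zd_iff semifield 0).2 ⟨⟨0, hn⟩, rfl⟩
  set z : {x : ∀ i, S i // IsZD x} := ⟨0, hz⟩ with hzdef
  obtain ⟨ix, hix⟩ := (zd_iff semifield x.1).1 x.2
  obtain ⟨iy, hiy⟩ := (zd_iff semifield y.1).1 y.2
  have hxz : x ≠ z := by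
    intro hxe
    exact h ⟨iy, by rw [hxe]; exact rfl, hiy⟩
  have hyz : y ≠ z := by
    intro hye
    exact h ⟨ix, hix, by rw [hye]; exact rfl⟩
  have haxz : (gamma1 (∀ i, S i)).Adj x z :=
    (adj_iff anti semifield x z).2 ⟨hxz, ix, hix, rfl⟩
  have hazy : (gamma1 (∀ i, S i)).Adj z y :=
    (adj_iff anti semifield z y).2 ⟨fun he => hyz he.symm, iy, rfl, hiy⟩
  let p : (gamma1 (∀ i, S i)).Walk x y :=
    SimpleGraph.Walk.cons haxz (SimpleGraph.Walk.cons hazy SimpleGraph.Walk.nil)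
  have h2 : (gamma1 (∀ i, S i)).dist x y ≤ 2 := (SimpleGraph.dist_le p).trans (le_of_eq rfl)
  have h0 : 0 < (gamma1 (∀ i, S i)).dist x y := p.reachable.pos_dist_of_ne hne
  have h1 : (gamma1 (∀ i, S i)).dist x y ≠ 1 := by
    intro he
    exact h ((adj_iff anti semifield x y).1 (SimpleGraph.dist_eq_one_iff_adj.1 he)).2
  omega


lemma card_ne_zero (i : Fin n) : Nat.card {a : S i // a ≠ 0} = Nat.card (S i) - 1 := by
  classical
  rw [Nat.card_eq_fintype_card, Nat.card_eq_fintype_card]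
  have := Fintype.card_subtype_compl (fun a : S i => a = 0)
  simp only [Fintype.card_subtype_eq] at this
  convert this using 2

include semifield in
lemma card_V : Nat.card {x : ∀ i, S i // IsZD x}
    = (∏ i, Nat.card (S i)) - ∏ i, (Nat.card (S i) - 1) := by
  classical
  have key : ∀ x : ∀ i, S i, (¬ IsZD x) ↔ (∀ i, x i ≠ 0) := by
    intro x; rw [zd_iff semifield]; push_neg; rfl
  have hc : Nat.card {x : ∀ i, S i // ¬ IsZD x} = ∏ i, (Nat.card (S i) - 1) := by
    rw [Nat.card_congr ((Equiv.subtypeEquivRight key).trans (Equiv.subtypePiEquivPi (p := fun i (b : S i) => b ≠ 0)))]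
    rw [Nat.card_pi]
    exact Finset.prod_congr rfl fun i _ => card_ne_zero i
  have hsplit : Nat.card {x : ∀ i, S i // IsZD x} + Nat.card {x : ∀ i, S i // ¬ IsZD x}
      = Nat.card (∀ i, S i) := by
    have h := Set.ncard_add_ncard_compl {x : ∀ i, S i | IsZD x}
    rw [← Nat.card_coe_set_eq, ← Nat.card_coe_set_eq] at h
    exact h
  rw [Nat.card_pi] at hsplit
  omega


include anti semifield in
lemma gdist_pos (hn : 0 < n) (u v : {x : ∀ i, S i // IsZD x}) (hne : u ≠ v) :
    0 < (gamma1 (∀ i, S i)).dist u v := by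
  by_cases h : ∃ i, u.1 i = 0 ∧ v.1 i = 0
  · rw [gamma1_dist_one anti semifield hne h]; omega
  · rw [dist_two anti semifield hn hne h]; omega

end Aux

lemma exists_third {R : Type*} [CommSemiring R] [Fintype R] [Nontrivial R]
    (anti : ∀ a b : R, a + b = 0 → a = 0 ∧ b = 0)
    (h : ¬ Nonempty (R ≃+* BB)) : ∃ c : R, c ≠ 0 ∧ c ≠ 1 := by
  classical
  by_contra hc
  push_neg at hc
  have elem : ∀ x : R, x = 0 ∨ x = 1 := fun x => (em (x = 0)).imp id (hc x)
  have h11 : (1 : R) + 1 = 1 := by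
    rcases elem ((1 : R) + 1) with h0 | h0
    · exact absurd (anti _ _ h0).1 one_ne_zero
    · exact h0
  apply h
  refine ⟨{ toFun := fun x => if x = 0 then BB.zero else BB.one,
            invFun := fun b => match b with | .zero => 0 | .one => 1,
            left_inv := ?_, right_inv := ?_, map_mul' := ?_, map_add' := ?_ }⟩
  · intro x
    rcases elem x with h | h <;> subst h <;> simp [one_ne_zero]
  · intro b
    cases b <;> simp [one_ne_zero]
  · intro x y
    rcases elem x with h | h <;> rcases elem y with h' | h' <;> subst h <;> subst h' <;>
      simp [one_ne_zero] <;> rfl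
  · intro x y
    rcases elem x with h | h <;> rcases elem y with h' | h' <;> subst h <;> subst h' <;>
      simp [one_ne_zero, h11] <;> rfl
set_option maxHeartbeats 1000000 in
theorem stmt14 {n : ℕ} (hn : 2 ≤ n) {S : Fin n → Type*}
    [∀ i, CommSemiring (S i)] [∀ i, Fintype (S i)] [∀ i, Nontrivial (S i)]
    (anti : ∀ i, ∀ a b : S i, a + b = 0 → a = 0 ∧ b = 0)
    (semifield : ∀ i, ∀ x : S i, x ≠ 0 → IsUnit x)
    (hB : ∃ i j : Fin n, i ≠ j ∧ ¬ Nonempty (S i ≃+* BB) ∧ ¬ Nonempty (S j ≃+* BB)) :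
    (metricDim (gamma1 (∀ i, S i)) : ℤ) =
      (∏ i, (Nat.card (S i) : ℤ)) - (∏ i, ((Nat.card (S i) : ℤ) - 1)) - 2 ^ n + 1 := by
  classical
  obtain ⟨p, q, hpq, hBp, hBq⟩ := hB
  obtain ⟨cp, hcp0, hcp1⟩ := exists_third (anti p) hBp
  obtain ⟨cq, hcq0, hcq1⟩ := exists_third (anti q) hBq
  have hn0 : 0 < n := by omega
  -- canonical representative of each zero-set class
  set canonF : (∀ i, S i) → (∀ i, S i) := fun x i => if x i = 0 then 0 else 1 with hcanonF
  have canon_zero : ∀ (x : ∀ i, S i) (i : Fin n), canonF x i = 0 ↔ x i = 0 := by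
    intro x i; by_cases h : x i = 0 <;> simp [hcanonF, h]
  have canon_congr : ∀ x y : ∀ i, S i, (∀ i, x i = 0 ↔ y i = 0) → canonF x = canonF y := by
    intro x y h; funext i
    by_cases hx : x i = 0
    · simp [hcanonF, hx, (h i).1 hx]
    · have hy : ¬ y i = 0 := fun hy => hx ((h i).2 hy)
      simp [hcanonF, hx, hy]
  set W : Set {x : ∀ i, S i // IsZD x} := {v | v.1 ≠ canonF v.1} with hW
  -- the selector: for every nonempty A ⊆ Fin n, a canonical vertex
  have sel_mem : ∀ A : Set (Fin n), A.Nonempty →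
      IsZD (fun i => if i ∈ A then (0 : S i) else 1) := by
    rintro A ⟨i, hi⟩
    exact (zd_iff semifield _).2 ⟨i, by simp [hi]⟩
  have sel_zero : ∀ (A : Set (Fin n)) (i : Fin n),
      (if i ∈ A then (0 : S i) else 1) = 0 ↔ i ∈ A := by
    intro A i; by_cases h : i ∈ A <;> simp [h]
  -- cardinality of the nonempty-subset type
  have card_ne : Nat.card {A : Set (Fin n) // A.Nonempty} = 2 ^ n - 1 := by
    rw [Nat.card_eq_fintype_card]
    rw [Fintype.card_congr (Equiv.subtypeEquivRight
      (fun A : Set (Fin n) => Set.nonempty_iff_ne_empty))]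
    have := Fintype.card_subtype_compl (fun A : Set (Fin n) => A = ∅)
    simp only [Fintype.card_subtype_eq, Fintype.card_set, Fintype.card_fin] at this
    convert this using 2
  -- |V| ≥ 2^n - 1
  have hV_ge : 2 ^ n - 1 ≤ Nat.card {x : ∀ i, S i // IsZD x} := by
    rw [← card_ne]
    refine Nat.card_le_card_of_injective
      (fun A => ⟨fun i => if i ∈ A.1 then (0 : S i) else 1, sel_mem A.1 A.2⟩) ?_
    intro A B hAB
    have : ∀ i, (if i ∈ A.1 then (0 : S i) else 1) = (if i ∈ B.1 then (0 : S i) else 1) :=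
      fun i => congrFun (congrArg Subtype.val hAB) i
    ext i
    constructor
    · intro hiA
      exact (sel_zero B.1 i).1 (by rw [← this i]; exact (sel_zero A.1 i).2 hiA)
    · intro hiB
      exact (sel_zero A.1 i).1 (by rw [this i]; exact (sel_zero B.1 i).2 hiB)
  -- Wᶜ ≃ nonempty subsets
  have eWc : Wᶜ.ncard = 2 ^ n - 1 := by
    rw [← Nat.card_coe_set_eq, ← card_ne]
    refine Nat.card_eq_of_bijective
      (fun v => ⟨{i | v.1.1 i = 0}, by
        obtain ⟨i, hi⟩ := (zd_iff semifield v.1.1).1 v.1.2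
        exact ⟨i, hi⟩⟩) ⟨?_, ?_⟩
    · rintro ⟨u, hu⟩ ⟨v, hv⟩ huv
      simp only [Set.mem_compl_iff, hW, Set.mem_setOf_eq, not_not] at hu hv
      have hz : ∀ i, u.1 i = 0 ↔ v.1 i = 0 := by
        intro i
        have := congrArg Subtype.val huv
        exact Set.ext_iff.1 (this : {i | u.1 i = 0} = {i | v.1 i = 0}) i
      have : u.1 = v.1 := by rw [hu, hv]; exact canon_congr _ _ hz
      exact Subtype.ext (Subtype.ext this)
    · rintro ⟨A, hA⟩
      refine ⟨⟨⟨fun i => if i ∈ A then (0 : S i) else 1, sel_mem A hA⟩, ?_⟩, ?_⟩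
      · simp only [Set.mem_compl_iff, hW, Set.mem_setOf_eq, not_not]
        funext i
        by_cases h : i ∈ A <;> simp [hcanonF, h]
      · ext i
        simp only [Set.mem_setOf_eq]
        exact sel_zero A i
  have hsplit : W.ncard + Wᶜ.ncard = Nat.card {x : ∀ i, S i // IsZD x} :=
    Set.ncard_add_ncard_compl W
  -- a witness in W whose zero set is exactly {i}
  have key : ∀ i : Fin n, ∃ w : {x : ∀ i, S i // IsZD x},
      w ∈ W ∧ (∀ j, w.1 j = 0 ↔ j = i) := by
    intro i
    have hkc : ∃ k, k ≠ i ∧ ∃ c : S k, c ≠ 0 ∧ c ≠ 1 := by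
      by_cases h : i = p
      · exact ⟨q, by rw [h]; exact fun e => hpq e.symm, cq, hcq0, hcq1⟩
      · exact ⟨p, fun e => h e.symm, cp, hcp0, hcp1⟩
    obtain ⟨k, hki, c, hc0, hc1⟩ := hkc
    set w0 : ∀ j, S j := Function.update (fun j => if j = i then (0 : S j) else 1) k c with hw0
    have hw0j : ∀ j, w0 j = 0 ↔ j = i := by
      intro j
      by_cases hj : j = k
      · subst hj
        rw [hw0, Function.update_self]
        exact ⟨fun h => absurd h hc0, fun h => absurd h hki⟩
      · rw [hw0, Function.update_of_ne hj]
        by_cases hji : j = i <;> simp [hji]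
    have hzd : IsZD w0 := (zd_iff semifield w0).2 ⟨i, (hw0j i).2 rfl⟩
    refine ⟨⟨w0, hzd⟩, ?_, hw0j⟩
    show w0 ≠ canonF w0
    intro hEq
    have hk1 : w0 k = c := by rw [hw0]; exact Function.update_self k c _
    have : canonF w0 k = 1 := by
      have : ¬ w0 k = 0 := by rw [hk1]; exact hc0
      simp [hcanonF, this]
    rw [← hEq, hk1] at this
    exact hc1 this
  -- W is resolving
  have hres : IsResolving (gamma1 (∀ i, S i)) W := by
    intro x y hxy
    by_contra hne
    have hxW : x ∉ W := by
      intro hx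
      have h0 := hxy x hx
      rw [SimpleGraph.dist_self] at h0
      have hp := gdist_pos anti semifield hn0 y x (Ne.symm hne)
      omega
    have hyW : y ∉ W := by
      intro hy
      have h0 := hxy y hy
      rw [SimpleGraph.dist_self] at h0
      have hp := gdist_pos anti semifield hn0 x y hne
      omega
    have hxc : x.1 = canonF x.1 := by simpa [hW] using hxW
    have hyc : y.1 = canonF y.1 := by simpa [hW] using hyW
    have hzne : ¬ ∀ i, x.1 i = 0 ↔ y.1 i = 0 := by
      intro hz
      exact hne (Subtype.ext (by rw [hxc, hyc]; exact canon_congr _ _ hz))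
    obtain ⟨i, hi⟩ := not_forall.1 hzne
    have main : ∀ u v : {x : ∀ i, S i // IsZD x}, u ∉ W → v ∉ W →
        (∀ w ∈ W, (gamma1 (∀ i, S i)).dist u w = (gamma1 (∀ i, S i)).dist v w) →
        u.1 i = 0 → v.1 i ≠ 0 → False := by
      intro u v huW hvW huv hu0 hv0
      obtain ⟨w, hwW, hwz⟩ := key i
      have hwu : u ≠ w := fun e => huW (e ▸ hwW)
      have hwv : v ≠ w := fun e => hvW (e ▸ hwW)
      have d1 : (gamma1 (∀ i, S i)).dist u w = 1 :=
        gamma1_dist_one anti semifield hwu ⟨i, hu0, (hwz i).2 rfl⟩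
      have d2 : (gamma1 (∀ i, S i)).dist v w = 2 := by
        refine dist_two anti semifield hn0 hwv ?_
        rintro ⟨j, hj1, hj2⟩
        exact hv0 ((hwz j).1 hj2 ▸ hj1)
      rw [huv w hwW] at d1
      omega
    by_cases hxi : x.1 i = 0
    · have hyi : y.1 i ≠ 0 := fun hy => hi ⟨fun _ => hy, fun _ => hxi⟩
      exact main x y hxW hyW hxy hxi hyi
    · have hyi : y.1 i = 0 := by
        by_contra hy
        exact hi ⟨fun h => absurd h hxi, fun h => absurd h hy⟩
      exact main y x hyW hxW (fun w hw => (hxy w hw).symm) hyi hxi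
  -- membership of the candidate value
  have hmem : Nat.card {x : ∀ i, S i // IsZD x} - (2 ^ n - 1) ∈
      {k | ∃ W' : Set {x : ∀ i, S i // IsZD x},
        W'.Finite ∧ W'.ncard = k ∧ IsResolving (gamma1 (∀ i, S i)) W'} :=
    ⟨W, Set.toFinite W, by omega, hres⟩
  -- lower bound
  have hlow : ∀ k ∈ {k | ∃ W' : Set {x : ∀ i, S i // IsZD x},
      W'.Finite ∧ W'.ncard = k ∧ IsResolving (gamma1 (∀ i, S i)) W'},
      Nat.card {x : ∀ i, S i // IsZD x} - (2 ^ n - 1) ≤ k := by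
    rintro k ⟨W', hfin, hcard, hresW'⟩
    have hinj : Function.Injective (fun v : ↥(W'ᶜ) =>
        (⟨{i | v.1.1 i = 0}, by
          obtain ⟨i, hi⟩ := (zd_iff semifield v.1.1).1 v.1.2
          exact ⟨i, hi⟩⟩ : {A : Set (Fin n) // A.Nonempty})) := by
      rintro ⟨u, hu⟩ ⟨v, hv⟩ huv
      simp only [Subtype.mk.injEq] at huv
      have hz : ∀ i, u.1 i = 0 ↔ v.1 i = 0 := fun i => by
        simpa using Set.ext_iff.1 huv i
      refine Subtype.ext (hresW' u v ?_)
      intro w hw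
      have hwu : u ≠ w := fun e => hu (e ▸ hw)
      have hwv : v ≠ w := fun e => hv (e ▸ hw)
      by_cases hcz : ∃ i, u.1 i = 0 ∧ w.1 i = 0
      · obtain ⟨i, hi1, hi2⟩ := hcz
        rw [gamma1_dist_one anti semifield hwu ⟨i, hi1, hi2⟩,
          gamma1_dist_one anti semifield hwv ⟨i, (hz i).1 hi1, hi2⟩]
      · have hcz' : ¬ ∃ i, v.1 i = 0 ∧ w.1 i = 0 := by
          rintro ⟨i, hi1, hi2⟩
          exact hcz ⟨i, (hz i).2 hi1, hi2⟩
        rw [dist_two anti semifield hn0 hwu hcz,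
          dist_two anti semifield hn0 hwv hcz']
    have hle : (W'ᶜ).ncard ≤ 2 ^ n - 1 := by
      rw [← Nat.card_coe_set_eq, ← card_ne]
      exact Nat.card_le_card_of_injective _ hinj
    have hs := Set.ncard_add_ncard_compl W'
    omega
  have hdim : metricDim (gamma1 (∀ i, S i)) =
      Nat.card {x : ∀ i, S i // IsZD x} - (2 ^ n - 1) := by
    unfold metricDim
    exact le_antisymm (Nat.sInf_le hmem) (le_csInf ⟨_, hmem⟩ hlow)
  -- arithmetic conclusion
  have hcV := card_V semifield (S := S)
  have h1le : ∀ i : Fin n, 1 ≤ Nat.card (S i) := fun i => Nat.card_pos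
  have hQP : (∏ i, (Nat.card (S i) - 1)) ≤ ∏ i, Nat.card (S i) :=
    Finset.prod_le_prod' fun i _ => Nat.sub_le _ _
  rw [hdim, hcV]
  rw [hcV] at hV_ge
  set P := ∏ i, Nat.card (S i) with hP
  set Q := ∏ i, (Nat.card (S i) - 1) with hQ
  have hPZ : ((P : ℕ) : ℤ) = ∏ i, (Nat.card (S i) : ℤ) := by
    rw [hP, Nat.cast_prod]
  have hQZ : ((Q : ℕ) : ℤ) = ∏ i, ((Nat.card (S i) : ℤ) - 1) := by
    rw [hQ, Nat.cast_prod]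
    refine Finset.prod_congr rfl fun i _ => ?_
    rw [Nat.cast_sub (h1le i)]
    norm_num
  have hE : ((2 ^ n : ℕ) : ℤ) = (2 : ℤ) ^ n := by push_cast; ring
  rw [← hPZ, ← hQZ, ← hE]
  have h2n : 1 ≤ 2 ^ n := Nat.one_le_two_pow
  omega
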